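/- Let (a, b) be a C¹ solution on an interval of the reduced resonant system i∂ₜa_p = Σ_{(p,q,r,s)∈Γ₀} b_q conj(b_r) a_s, i∂ₜb_p = Σ_{(p,q,r,s)∈Γ₀} a_q conj(a_r) b_s, with values in h^σ (σ ≥ 1, absolutely summable sums). Then for each fixed n ∈ ℤ, the quantity |a_n(t)|² + |b_n(t)|² is constant in time. -/

import Mathlib

open scoped ComplexConjugate

/-- The reduced resonant nonlinearity over `Γ₀ = {(p,q,r,s) : {p,r} = {q,s}}`. -/
noncomputable def Rop (f g h : ℤ → ℂ) (p : ℤ) : ℂ :=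
  ∑' x : {x : ℤ × ℤ × ℤ // ({p, x.2.1} : Set ℤ) = {x.1, x.2.2}},
    f x.val.1 * conj (g x.val.2.1) * h x.val.2.2

/-- Cauchy–Schwarz type summability of products. -/
lemma summable_mul_of_sq {g h : ℤ → ℂ}
    (hg : Summable (fun p => ‖g p‖ ^ 2)) (hh : Summable (fun p => ‖h p‖ ^ 2)) :
    Summable (fun p => g p * h p) := by
  apply Summable.of_norm
  apply Summable.of_nonneg_of_le (fun p => norm_nonneg _) (fun p => ?_) (hg.add hh)
  rw [norm_mul]
  nlinarith [norm_nonneg (g p), norm_nonneg (h p), sq_nonneg (‖g p‖ - ‖h p‖)]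

/-- Decomposition of the resonant sum. -/
lemma Rop_eq (f g h : ℤ → ℂ) (p : ℤ)
    (h1 : Summable fun r : ℤ => conj (g r) * h r)
    (h2 : Summable fun r : ℤ => f r * conj (g r)) :
    Rop f g h p = f p * (∑' r : ℤ, conj (g r) * h r)
      + (∑' r : {r : ℤ // r ≠ p}, f r.1 * conj (g r.1)) * h p := by
  classical
  set F : ℤ × ℤ × ℤ → ℂ := fun x => f x.1 * conj (g x.2.1) * h x.2.2 with hF
  set u : ℤ → ℤ × ℤ × ℤ := fun r => (p, r, r) with hu_def
  set v : ℤ → ℤ × ℤ × ℤ := fun r => (r, r, p) with hv_def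
  have hu : Function.Injective u := by
    intro r r' hr
    simpa [u, Prod.ext_iff] using hr
  have hv : Function.Injective v := by
    intro r r' hr
    simpa [v, Prod.ext_iff] using hr
  have hD : {x : ℤ × ℤ × ℤ | ({p, x.2.1} : Set ℤ) = {x.1, x.2.2}}
      = Set.range u ∪ v '' {r : ℤ | r ≠ p} := by
    ext ⟨q, r, s⟩
    simp only [Set.mem_setOf_eq, Set.pair_eq_pair_iff, Set.mem_union, Set.mem_range,
      Set.mem_image, Set.mem_setOf_eq, u, v, Prod.mk.injEq]
    constructor
    · rintro (⟨rfl, rfl⟩ | ⟨rfl, rfl⟩)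
      · exact Or.inl ⟨r, rfl, rfl, rfl⟩
      · by_cases hrp : r = p
        · subst hrp; exact Or.inl ⟨r, rfl, rfl, rfl⟩
        · exact Or.inr ⟨r, hrp, rfl, rfl, rfl⟩
    · rintro (⟨r', rfl, rfl, rfl⟩ | ⟨r', hr', rfl, rfl, rfl⟩)
      · exact Or.inl ⟨rfl, rfl⟩
      · exact Or.inr ⟨rfl, rfl⟩
  have hdisj : Disjoint (Set.range u) (v '' {r : ℤ | r ≠ p}) := by
    rw [Set.disjoint_left]
    rintro x ⟨r, rfl⟩ ⟨r', hr', hx⟩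
    apply hr'
    have h1 := congrArg Prod.fst hx
    simpa [u, v] using h1
  have hA : Summable ((F ∘ (↑)) : Set.range u → ℂ) := by
    rw [← (Equiv.ofInjective u hu).summable_iff]
    have : ((F ∘ (↑)) ∘ (Equiv.ofInjective u hu)) = fun r : ℤ => f p * (conj (g r) * h r) := by
      funext r
      simp [F, u, mul_assoc]
    rw [this]
    exact h1.mul_left _
  have hB : Summable ((F ∘ (↑)) : (v '' {r : ℤ | r ≠ p}) → ℂ) := by
    rw [← (Equiv.Set.imageOfInjOn v _ hv.injOn).summable_iff]
    have : ((F ∘ (↑)) ∘ (Equiv.Set.imageOfInjOn v _ hv.injOn))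
        = fun r : {r : ℤ | r ≠ p} => (f r.1 * conj (g r.1)) * h p := by
      funext r
      simp [F, v, Equiv.Set.imageOfInjOn]
    rw [this]
    exact ((h2.subtype _).mul_right _)
  have hsub : Rop f g h p
      = ∑' x : {x : ℤ × ℤ × ℤ | ({p, x.2.1} : Set ℤ) = {x.1, x.2.2}}, F x := rfl
  rw [hsub, hD, Summable.tsum_union_disjoint hdisj hA hB, tsum_range F hu, tsum_image F hv.injOn]
  congr 1
  · rw [show (fun r : ℤ => F (u r)) = fun r : ℤ => f p * (conj (g r) * h r) by
      funext r; simp [F, u, mul_assoc], tsum_mul_left]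
  · rw [show (fun r : {r : ℤ | r ≠ p} => F (v r.1))
        = fun r : {r : ℤ | r ≠ p} => (f r.1 * conj (g r.1)) * h p by
      funext r; simp [F, v], tsum_mul_right]
    rfl

/-- Derivative of the squared norm. -/
lemma hasDerivAt_norm_sq {f : ℝ → ℂ} {f' : ℂ} {t : ℝ} (hf : HasDerivAt f f' t) :
    HasDerivAt (fun s => ‖f s‖ ^ 2) (2 * ((conj (f t)) * f').re) t := by
  have hre : HasDerivAt (fun s => (f s).re) (Complex.reCLM f') t :=
    Complex.reCLM.hasFDerivAt.comp_hasDerivAt t hf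
  have him : HasDerivAt (fun s => (f s).im) (Complex.imCLM f') t :=
    Complex.imCLM.hasFDerivAt.comp_hasDerivAt t hf
  have h1 := (hre.pow 2).add (him.pow 2)
  have hfun : (fun s => ‖f s‖ ^ 2) = fun s => (f s).re ^ 2 + (f s).im ^ 2 := by
    funext s
    rw [Complex.sq_norm, Complex.normSq_apply]
    ring
  rw [hfun]
  convert h1 using 1
  · rfl
  · rfl
  · rfl
  simp [Complex.mul_re]
  ring

/-- For a `C¹` solution `(a,b)` of the reduced resonant system
`i∂ₜa = R(b,b,a)`, `i∂ₜb = R(a,a,b)` with values in `h^σ`, `σ ≥ 1`,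
each quantity `|a_n(t)|² + |b_n(t)|²` is constant in time. -/
theorem stmt_7 (σ : ℝ) (hσ : 1 ≤ σ) (I : Set ℝ) (hI : I ∈ {S : Set ℝ | S.OrdConnected})
    (a b : ℝ → ℤ → ℂ)
    (hsum : ∀ t ∈ I, Summable (fun p : ℤ =>
      (1 + (p : ℝ) ^ 2) ^ σ * (‖a t p‖ ^ 2 + ‖b t p‖ ^ 2)))
    (ha : ∀ t ∈ I, ∀ p : ℤ,
      HasDerivAt (fun s => a s p) (-Complex.I * Rop (b t) (b t) (a t) p) t)
    (hb : ∀ t ∈ I, ∀ p : ℤ,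
      HasDerivAt (fun s => b s p) (-Complex.I * Rop (a t) (a t) (b t) p) t)
    (n : ℤ) (t₁ t₂ : ℝ) (ht₁ : t₁ ∈ I) (ht₂ : t₂ ∈ I) :
    ‖a t₁ n‖ ^ 2 + ‖b t₁ n‖ ^ 2 = ‖a t₂ n‖ ^ 2 + ‖b t₂ n‖ ^ 2 := by
  -- square summability of a and b at each time
  have hsq : ∀ t ∈ I, Summable (fun p : ℤ => ‖a t p‖ ^ 2 + ‖b t p‖ ^ 2) := by
    intro t ht
    apply Summable.of_nonneg_of_le (fun p => by positivity) (fun p => ?_) (hsum t ht)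
    have h1 : (1:ℝ) ≤ (1 + (p : ℝ) ^ 2) ^ σ :=
      Real.one_le_rpow (by nlinarith [sq_nonneg ((p : ℝ))]) (by linarith)
    nlinarith [norm_nonneg (a t p), norm_nonneg (b t p), sq_nonneg ‖a t p‖, sq_nonneg ‖b t p‖]
  have hsa : ∀ t ∈ I, Summable (fun p : ℤ => ‖a t p‖ ^ 2) := fun t ht =>
    Summable.of_nonneg_of_le (fun p => by positivity)
      (fun p => by nlinarith [sq_nonneg ‖b t p‖]) (hsq t ht)
  have hsb : ∀ t ∈ I, Summable (fun p : ℤ => ‖b t p‖ ^ 2) := fun t ht =>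
    Summable.of_nonneg_of_le (fun p => by positivity)
      (fun p => by nlinarith [sq_nonneg ‖a t p‖]) (hsq t ht)
  -- products summable
  have hmul : ∀ t ∈ I, ∀ g h : ℝ → ℤ → ℂ, (g = a ∨ g = b) → (h = a ∨ h = b) →
      Summable (fun r : ℤ => conj (g t r) * h t r) := by
    intro t ht g h hg hh
    apply summable_mul_of_sq
    · rcases hg with rfl | rfl
      · simpa using hsa t ht
      · simpa using hsb t ht
    · rcases hh with rfl | rfl
      · exact hsa t ht
      · exact hsb t ht
  -- derivative of the energy is zero
  set E : ℝ → ℝ := fun t => ‖a t n‖ ^ 2 + ‖b t n‖ ^ 2 with hE_def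
  have hE : ∀ t ∈ I, HasDerivAt E 0 t := by
    intro t ht
    have hDa := hasDerivAt_norm_sq (ha t ht n)
    have hDb := hasDerivAt_norm_sq (hb t ht n)
    have hD := hDa.add hDb
    convert hD using 1
    · rfl
    · rfl
    · rfl
    -- show the derivative value is zero
    set Ra := Rop (b t) (b t) (a t) n with hRa_def
    set Rb := Rop (a t) (a t) (b t) n with hRb_def
    set S : ℂ := ∑' r : ℤ, conj (b t r) * a t r with hS_def
    set T : ℂ := ∑' r : ℤ, conj (a t r) * b t r with hT_def
    set P : ℂ := ∑' r : {r : ℤ // r ≠ n}, b t r.1 * conj (b t r.1) with hP_def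
    set Q : ℂ := ∑' r : {r : ℤ // r ≠ n}, a t r.1 * conj (a t r.1) with hQ_def
    have hRa : Ra = b t n * S + P * a t n :=
      Rop_eq (b t) (b t) (a t) n (hmul t ht b a (Or.inr rfl) (Or.inl rfl))
        (by
          have := hmul t ht b b (Or.inr rfl) (Or.inr rfl)
          apply Summable.of_norm
          have h' := this.norm
          apply h'.congr
          intro r
          simp [norm_mul, mul_comm])
    have hRb : Rb = a t n * T + Q * b t n :=
      Rop_eq (a t) (a t) (b t) n (hmul t ht a b (Or.inl rfl) (Or.inr rfl))
        (by
          have := hmul t ht a a (Or.inl rfl) (Or.inl rfl)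
          apply Summable.of_norm
          have h' := this.norm
          apply h'.congr
          intro r
          simp [norm_mul, mul_comm])
    have hconjS : conj S = T := by
      rw [hS_def, hT_def, show (conj (∑' r : ℤ, conj (b t r) * a t r))
          = star (∑' r : ℤ, conj (b t r) * a t r) from rfl, tsum_star]
      exact tsum_congr fun r => by simp [mul_comm]
    have hconjT : conj T = S := by
      rw [← hconjS, Complex.conj_conj]
    have hconjP : conj P = P := by
      rw [hP_def, show (conj (∑' r : {r : ℤ // r ≠ n}, b t r.1 * conj (b t r.1)))
          = star (∑' r : {r : ℤ // r ≠ n}, b t r.1 * conj (b t r.1)) from rfl, tsum_star]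
      exact tsum_congr fun r => by simp [mul_comm]
    have hconjQ : conj Q = Q := by
      rw [hQ_def, show (conj (∑' r : {r : ℤ // r ≠ n}, a t r.1 * conj (a t r.1)))
          = star (∑' r : {r : ℤ // r ≠ n}, a t r.1 * conj (a t r.1)) from rfl, tsum_star]
      exact tsum_congr fun r => by simp [mul_comm]
    -- the key quantity is self-conjugate
    set X : ℂ := conj (a t n) * Ra + conj (b t n) * Rb with hX_def
    have hXconj : conj X = X := by
      rw [hX_def, hRa, hRb]
      simp only [map_add, map_mul, Complex.conj_conj, hconjS, hconjT, hconjP, hconjQ]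
      ring
    have hXim : X.im = 0 := Complex.conj_eq_iff_im.mp hXconj
    have e1 : ∀ w z : ℂ, (w * (-Complex.I * z)).re = (w * z).im := by
      intro w z
      simp [Complex.mul_re, Complex.mul_im]
      ring
    rw [e1, e1]
    have : (conj (a t n) * Ra).im + (conj (b t n) * Rb).im = 0 := by
      have := hXim
      rw [hX_def] at this
      simpa [Complex.add_im] using this
    linarith
  -- conclude via the mean value inequality
  have hconv : Convex ℝ I := hI.out.convex
  have key := hconv.norm_image_sub_le_of_norm_hasDerivWithin_le
    (f := E) (f' := fun _ => (0:ℝ)) (C := 0) (fun x hx => (hE x hx).hasDerivWithinAt)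
    (fun x _ => by simp) ht₁ ht₂
  have : ‖E t₂ - E t₁‖ ≤ 0 := by simpa using key
  have h0 : E t₂ = E t₁ := by
    have := norm_le_zero_iff.mp this
    linarith [sub_eq_zero.mp this]
  simpa [hE_def] using h0.symm
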